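/- If T' ∈ ant(T) (i.e., T' is in the field of the anticipation equivalence ≈_T) and T'' = antOut(T', γ) is defined for a label sequence γ, then T'' ∈ extAnt(T), the field of the extended anticipation equivalence ≈̂_T. -/

import Mathlib

/-- Binary session types: output selection `⊕{lᵢ:Tᵢ}`, input branching `&{lᵢ:Tᵢ}`,
recursion `μt.T` (de Bruijn), variables, and `end`. Labels are natural numbers. -/
inductive SType : Type
  | out : List (Nat × SType) → SType
  | inp : List (Nat × SType) → SType
  | mu  : SType → SType
  | var : Nat → SType
  | done : SType

mutual
/-- The dual of a session type: swap `⊕` and `&`. -/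
def SType.dual : SType → SType
  | .out bs => .inp (dualBranches bs)
  | .inp bs => .out (dualBranches bs)
  | .mu t => .mu t.dual
  | .var n => .var n
  | .done => .done
def dualBranches : List (Nat × SType) → List (Nat × SType)
  | [] => []
  | (l, t) :: rest => (l, t.dual) :: dualBranches rest
end

mutual
/-- Substitution of `s` for the variable of de Bruijn index `k`. -/
def SType.subst (s : SType) : Nat → SType → SType
  | k, .out bs => .out (substBranches s k bs)
  | k, .inp bs => .inp (substBranches s k bs)
  | k, .mu t => .mu (SType.subst s (k+1) t)
  | k, .var n => if n = k then s else .var n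
  | _, .done => .done
def substBranches (s : SType) : Nat → List (Nat × SType) → List (Nat × SType)
  | _, [] => []
  | k, (l, t) :: rest => (l, SType.subst s k t) :: substBranches s k rest
end

mutual
/-- One-step unfolding of a session type. -/
def SType.unfold1 : SType → SType
  | .out bs => .out (unfold1Branches bs)
  | .inp bs => .inp (unfold1Branches bs)
  | .mu t => SType.subst (.mu t) 0 t
  | .var n => .var n
  | .done => .done
def unfold1Branches : List (Nat × SType) → List (Nat × SType)
  | [] => []
  | (l, t) :: rest => (l, t.unfold1) :: unfold1Branches rest
end

/-- `n`-fold unfolding. -/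
def SType.unfoldN : Nat → SType → SType
  | 0, t => t
  | n+1, t => (SType.unfoldN n t).unfold1

/-- A session type is single-out if every output selection has exactly one choice. -/
inductive SingleOut : SType → Prop
  | out {l t} : SingleOut t → SingleOut (.out [(l, t)])
  | inp {bs} : (∀ p ∈ bs, SingleOut p.2) → SingleOut (.inp bs)
  | mu {t} : SingleOut t → SingleOut (.mu t)
  | var {n} : SingleOut (.var n)
  | done : SingleOut .done

/-- A session type is single-in if every input branching has exactly one choice. -/
inductive SingleIn : SType → Prop
  | out {bs} : (∀ p ∈ bs, SingleIn p.2) → SingleIn (.out bs)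
  | inp {l t} : SingleIn t → SingleIn (.inp [(l, t)])
  | mu {t} : SingleIn t → SingleIn (.mu t)
  | var {n} : SingleIn (.var n)
  | done : SingleIn .done
inductive ICtx : Type
  | hole : Nat → ICtx
  | inp : List (Nat × ICtx) → ICtx

mutual
/-- Fill each hole `n` of the input context with `f n`. -/
def ICtx.fill : ICtx → (Nat → SType) → SType
  | .hole n, f => f n
  | .inp bs, f => .inp (fillBranches bs f)
def fillBranches : List (Nat × ICtx) → (Nat → SType) → List (Nat × SType)
  | [], _ => []
  | (l, A) :: rest, f => (l, A.fill f) :: fillBranches rest f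
end

mutual
/-- The list of hole indices occurring in an input context. -/
def ICtx.holes : ICtx → List Nat
  | .hole n => [n]
  | .inp bs => holesBranches bs
def holesBranches : List (Nat × ICtx) → List Nat
  | [] => []
  | (_, A) :: rest => A.holes ++ holesBranches rest
end

/-- Well-formed input context: holes are exactly `1..m` for some `m ≥ 1`,
each occurring exactly once. -/
def ICtx.WF (A : ICtx) : Prop :=
  ∃ m : Nat, 1 ≤ m ∧ A.holes.Perm (List.range' 1 m)

/-- `ClosedAt k T`: all free variables of `T` have index `< k`. -/
inductive ClosedAt : Nat → SType → Prop
  | out {k bs} : (∀ p ∈ bs, ClosedAt k p.2) → ClosedAt k (.out bs)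
  | inp {k bs} : (∀ p ∈ bs, ClosedAt k p.2) → ClosedAt k (.inp bs)
  | mu {k t} : ClosedAt (k+1) t → ClosedAt k (.mu t)
  | var {k n} : n < k → ClosedAt k (.var n)
  | done {k} : ClosedAt k .done

/-- A closed session type. -/
def SClosed (T : SType) : Prop := ClosedAt 0 T

/-- The variables occurring unguarded (i.e. not under an input or output) in `T`. -/
def SType.unguarded : SType → List Nat
  | .var n => [n]
  | .mu t => t.unguarded.filterMap (fun n => match n with | 0 => none | m+1 => some m)
  | _ => []

/-- Guardedness: in each `μt.T`, the variable `t` occurs only under an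
input or output. -/
inductive SGuarded : SType → Prop
  | out {bs} : (∀ p ∈ bs, SGuarded p.2) → SGuarded (.out bs)
  | inp {bs} : (∀ p ∈ bs, SGuarded p.2) → SGuarded (.inp bs)
  | mu {t} : 0 ∉ t.unguarded → SGuarded t → SGuarded (.mu t)
  | var {n} : SGuarded (.var n)
  | done : SGuarded .done

/-- `reach T`: the minimal set containing `T` and closed under consuming an
input branching, top-level unfolding of recursion, and consuming a single
output. -/
inductive Reach (T : SType) : SType → Prop
  | refl : Reach T T
  | inp {bs l t} : Reach T (.inp bs) → (l, t) ∈ bs → Reach T t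
  | mu {t} : Reach T (.mu t) → Reach T (SType.subst (.mu t) 0 t)
  | out {l t} : Reach T (.out [(l, t)]) → Reach T t

/-- `OutUnf T T'`: `T'` is the output unfolding `outUnf(T)` of `T`
(a partial operation, given relationally): recursion is unfolded in each
branch just enough to expose the first output selection. -/
inductive OutUnf : SType → SType → Prop
  | out {bs} : OutUnf (.out bs) (.out bs)
  | inp {bs bs' : List (Nat × SType)} :
      bs.length = bs'.length →
      (∀ (i : Nat) (h1 : i < bs.length) (h2 : i < bs'.length),
        (bs.get ⟨i, h1⟩).1 = (bs'.get ⟨i, h2⟩).1) →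
      (∀ (i : Nat) (h1 : i < bs.length) (h2 : i < bs'.length),
        OutUnf (bs.get ⟨i, h1⟩).2 (bs'.get ⟨i, h2⟩).2) →
      OutUnf (.inp bs) (.inp bs')
  | mu {t t'} : OutUnf (SType.subst (.mu t) 0 t) t' → OutUnf (.mu t) t'

/-- `R` is an `≈_T` relation: related types are in `reach T` and can, after
output unfolding, anticipate a common output label, with all pairs of
continuations again related. -/
def IsAntEqRel (T : SType) (R : SType → SType → Prop) : Prop :=
  (∀ a b, R a b → Reach T a ∧ Reach T b) ∧
  ∀ a b, R a b → ∃ (l : Nat) (A A' : ICtx) (f g : Nat → SType),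
    A.WF ∧ A'.WF ∧
    OutUnf a (A.fill (fun k => .out [(l, f k)])) ∧
    OutUnf b (A'.fill (fun k => .out [(l, g k)])) ∧
    (∀ i ∈ A.holes, ∀ j ∈ A'.holes, R (f i) (g j))

/-- `a ≈_T b`: `a` and `b` can anticipate the same infinite output sequence. -/
def AntEq (T a b : SType) : Prop := ∃ R, IsAntEqRel T R ∧ R a b

/-- `ant T`: the field of `≈_T`. -/
def AntField (T a : SType) : Prop := ∃ b, AntEq T a b ∨ AntEq T b a

/-- Output anticipation along a sequence of labels (relational presentation of
the partial function `antOut`). -/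
inductive AntOut : SType → List Nat → SType → Prop
  | nil (T : SType) : AntOut T [] T
  | snoc {T : SType} {σ : List Nat} {U : SType} {l : Nat} {A : ICtx} {f : Nat → SType} :
      AntOut T σ U → A.WF →
      OutUnf U (A.fill (fun k => .out [(l, f k)])) →
      AntOut T (σ ++ [l]) (A.fill f)

/-- `T` can infinitely anticipate outputs: there is an infinite label sequence
all of whose finite prefixes can be anticipated. -/
def AntOutInf (T : SType) : Prop :=
  ∃ s : Nat → Nat, ∀ n : Nat, ∃ U, AntOut T ((List.range n).map s) U

/-- `Leaf T u`: `u` belongs to the leaf set of `T`, i.e. `u` is not an input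
branching and is reachable from the root of `T` through inputs only. -/
inductive Leaf : SType → SType → Prop
  | self {t} : (∀ bs, t ≠ .inp bs) → Leaf t t
  | inp {bs l t u} : (l, t) ∈ bs → Leaf t u → Leaf (.inp bs) u

/-- The extended anticipation relation `a ≈̂_T b`. -/
def ExtAntEq (T a b : SType) : Prop :=
  ∃ (l : Nat) (A A' : ICtx) (f g : Nat → SType),
    A.WF ∧ A'.WF ∧
    OutUnf a (A.fill (fun k => .out [(l, f k)])) ∧
    OutUnf b (A'.fill (fun k => .out [(l, g k)])) ∧
    (∀ i ∈ A.holes, ∀ j ∈ A'.holes, AntEq T (f i) (g j))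

/-- `extAnt T`: the field of `≈̂_T`. -/
def ExtAntField (T a : SType) : Prop := ∃ b, ExtAntEq T a b ∨ ExtAntEq T b a



theorem fillBranches_eq_map (bs : List (Nat × ICtx)) (f : Nat → SType) :
    fillBranches bs f = bs.map (fun p => (p.1, p.2.fill f)) := by
  induction bs with
  | nil => rfl
  | cons hd tl ih => cases hd; simp [fillBranches, ih]

theorem mem_holesBranches {i : Nat} {bs : List (Nat × ICtx)} :
    i ∈ holesBranches bs ↔ ∃ p ∈ bs, i ∈ p.2.holes := by
  induction bs with
  | nil => simp [holesBranches]
  | cons hd tl ih =>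
    cases hd with
    | mk l A => simp [holesBranches, List.mem_append, ih]

theorem leaf_of_ne_inp {t u : SType} (hne : ∀ bs, t ≠ .inp bs) :
    Leaf t u ↔ u = t := by
  constructor
  · intro h; cases h with
    | self => rfl
    | inp hmem hlf => exact absurd rfl (hne _)
  · rintro rfl; exact Leaf.self hne

theorem leaf_out {bs : List (Nat × SType)} {u : SType} :
    Leaf (.out bs) u ↔ u = .out bs :=
  leaf_of_ne_inp (by intro bs' h; cases h)

theorem leaf_fill_mp : ∀ {V u : SType}, Leaf V u → ∀ (A : ICtx) (g : Nat → SType),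
    V = A.fill g → ∃ i ∈ A.holes, Leaf (g i) u := by
  intro V u h
  induction h with
  | self hne =>
    intro A g hV
    cases A with
    | hole n =>
      rw [ICtx.fill] at hV; subst hV
      exact ⟨n, by simp [ICtx.holes], Leaf.self hne⟩
    | inp bs => exact absurd hV (hne _)
  | inp hmem hlf ih =>
    intro A g hV
    cases A with
    | hole n =>
      refine ⟨n, by simp [ICtx.holes], ?_⟩
      rw [ICtx.fill] at hV; rw [← hV]
      exact Leaf.inp hmem hlf
    | inp cs =>
      rw [ICtx.fill, SType.inp.injEq, fillBranches_eq_map] at hV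
      subst hV
      obtain ⟨c, hc, heq⟩ := List.mem_map.mp hmem
      obtain ⟨i, hi, hl⟩ := ih c.2 g (by rw [(Prod.mk.injEq _ _ _ _).mp heq |>.2])
      exact ⟨i, mem_holesBranches.mpr ⟨c, hc, hi⟩, hl⟩

theorem leaf_fill_mpr : ∀ (A : ICtx) (g : Nat → SType) (i : Nat), i ∈ A.holes →
    ∀ u, Leaf (g i) u → Leaf (A.fill g) u
  | .hole n, g, i, hi, u, hl => by
    simp [ICtx.holes] at hi; subst hi; exact hl
  | .inp bs, g, i, hi, u, hl => by
    rw [ICtx.holes] at hi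
    obtain ⟨p, hp, hip⟩ := mem_holesBranches.mp hi
    have hrec := leaf_fill_mpr p.2 g i hip u hl
    rw [ICtx.fill]
    refine Leaf.inp (l := p.1) ?_ hrec
    rw [fillBranches_eq_map]; exact List.mem_map.mpr ⟨p, hp, rfl⟩
termination_by A => sizeOf A
decreasing_by
  simp_wf
  have := List.sizeOf_lt_of_mem hp
  cases p; simp at this ⊢; omega

theorem leaf_fill {A : ICtx} {g : Nat → SType} {u : SType} :
    Leaf (A.fill g) u ↔ ∃ i ∈ A.holes, Leaf (g i) u :=
  ⟨fun h => leaf_fill_mp h A g rfl, fun ⟨i, hi, hl⟩ => leaf_fill_mpr A g i hi u hl⟩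

theorem outUnf_det : ∀ {a b : SType}, OutUnf a b → ∀ {c}, OutUnf a c → b = c := by
  intro a b h
  induction h with
  | out => intro c hc; cases hc; rfl
  | inp hlen hlab hrec ih =>
    intro c hc
    cases hc with
    | inp hlen2 hlab2 hrec2 =>
      rename_i bs bs' bs2
      congr 1
      apply List.ext_get (by omega)
      intro i h1 h2
      have hli : i < bs.length := by omega
      refine Prod.ext ?_ ?_
      · rw [← hlab i hli h1, ← hlab2 i hli h2]
      · exact ih i hli h1 (hrec2 i hli h2)
  | mu h ih =>
    intro c hc
    cases hc with
    | mu h2 => exact ih h2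

theorem outUnf_fill : ∀ (A : ICtx) (f g : Nat → SType),
    (∀ i ∈ A.holes, OutUnf (f i) (g i)) → OutUnf (A.fill f) (A.fill g)
  | .hole n, f, g, h => h n (by simp [ICtx.holes])
  | .inp bs, f, g, h => by
    rw [ICtx.fill, ICtx.fill, fillBranches_eq_map, fillBranches_eq_map]
    refine OutUnf.inp (by simp) ?_ ?_
    · intro i h1 h2; simp
    · intro i h1 h2
      simp only [List.get_eq_getElem, List.getElem_map]
      have hli : i < bs.length := by simpa using h1
      have hmem : bs[i] ∈ bs := List.getElem_mem hli
      exact outUnf_fill (bs[i]).2 f g (fun j hj =>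
        h j (by rw [ICtx.holes]; exact mem_holesBranches.mpr ⟨bs[i], hmem, hj⟩))
termination_by A => sizeOf A
decreasing_by
  simp_wf
  have h1 := List.sizeOf_lt_of_mem hmem
  have h2 : sizeOf (bs[i].2) < sizeOf (bs[i]) := by
    cases hh : bs[i] with | mk a b => simp [hh]
  omega

mutual
def ictxShift (d : Nat) : ICtx → ICtx
  | .hole n => .hole (n + d)
  | .inp bs => .inp (shiftBranches d bs)
def shiftBranches (d : Nat) : List (Nat × ICtx) → List (Nat × ICtx)
  | [] => []
  | (l, A) :: rest => (l, ictxShift d A) :: shiftBranches d rest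
end

mutual
theorem holes_shift : ∀ (A : ICtx) (d : Nat),
    (ictxShift d A).holes = A.holes.map (· + d)
  | .hole n, d => by simp [ictxShift, ICtx.holes]
  | .inp bs, d => by
    rw [ictxShift, ICtx.holes, ICtx.holes, holesB_shift]
theorem holesB_shift : ∀ (bs : List (Nat × ICtx)) (d : Nat),
    holesBranches (shiftBranches d bs) = (holesBranches bs).map (· + d)
  | [], d => rfl
  | (l, A) :: rest, d => by
    rw [shiftBranches, holesBranches, holesBranches, List.map_append,
      holes_shift A d, holesB_shift rest d]
end

mutual
theorem fill_shift : ∀ (A : ICtx) (d : Nat) (f : Nat → SType),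
    (ictxShift d A).fill f = A.fill (fun n => f (n + d))
  | .hole n, d, f => by simp [ictxShift, ICtx.fill]
  | .inp bs, d, f => by
    rw [ictxShift, ICtx.fill, ICtx.fill, fillB_shift]
theorem fillB_shift : ∀ (bs : List (Nat × ICtx)) (d : Nat) (f : Nat → SType),
    fillBranches (shiftBranches d bs) f = fillBranches bs (fun n => f (n + d))
  | [], d, f => rfl
  | (l, A) :: rest, d, f => by
    rw [shiftBranches, fillBranches, fillBranches, fill_shift A d f,
      fillB_shift rest d f]
end

mutual
theorem fill_congr : ∀ (A : ICtx) (f g : Nat → SType),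
    (∀ i ∈ A.holes, f i = g i) → A.fill f = A.fill g
  | .hole n, f, g, h => h n (by simp [ICtx.holes])
  | .inp bs, f, g, h => by
    rw [ICtx.fill, ICtx.fill, fillB_congr bs f g (by rw [ICtx.holes] at h; exact h)]
theorem fillB_congr : ∀ (bs : List (Nat × ICtx)) (f g : Nat → SType),
    (∀ i ∈ holesBranches bs, f i = g i) → fillBranches bs f = fillBranches bs g
  | [], f, g, h => rfl
  | (l, A) :: rest, f, g, h => by
    rw [fillBranches, fillBranches,
      fill_congr A f g (fun i hi => h i (by rw [holesBranches]; simp [hi])),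
      fillB_congr rest f g (fun i hi => h i (by rw [holesBranches]; simp [hi]))]
end

theorem mem_range1 {k m : Nat} : k ∈ List.range' 1 m ↔ 1 ≤ k ∧ k ≤ m := by
  rw [List.mem_range']
  constructor
  · rintro ⟨i, hi, rfl⟩; omega
  · intro ⟨h1, h2⟩; exact ⟨k - 1, by omega⟩

theorem decomp0 : ∀ (V : SType) (l : Nat),
    (∀ u, Leaf V u → ∃ t, u = .out [(l, t)]) →
    ∃ (A : ICtx) (m : Nat) (h : Nat → SType),
      A.holes = List.range' 1 m ∧ V = A.fill (fun k => .out [(l, h k)]) := by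
  intro V
  induction V using SType.rec
    (motive_2 := fun bs => ∀ l : Nat,
      (∀ p ∈ bs, ∀ u, Leaf p.2 u → ∃ t, u = .out [(l, t)]) →
      ∃ (cs : List (Nat × ICtx)) (m : Nat) (h : Nat → SType),
        holesBranches cs = List.range' 1 m ∧
        bs = fillBranches cs (fun k => .out [(l, h k)]))
    (motive_3 := fun p => ∀ l : Nat,
      (∀ u, Leaf p.2 u → ∃ t, u = .out [(l, t)]) →
      ∃ (A : ICtx) (m : Nat) (h : Nat → SType),
        A.holes = List.range' 1 m ∧ p.2 = A.fill (fun k => .out [(l, h k)])) with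
  | inp bs ih =>
    intro l hyp
    have hyp' : ∀ p ∈ bs, ∀ u, Leaf p.2 u → ∃ t, u = .out [(l, t)] := by
      intro p hp u hu
      exact hyp u (Leaf.inp (l := p.1) (by simpa using hp) hu)
    obtain ⟨cs, m, h, hch, hcf⟩ := ih l hyp'
    exact ⟨.inp cs, m, h, by rw [ICtx.holes]; exact hch,
      by rw [ICtx.fill]; rw [← hcf]⟩
  | @out bs _ =>
    intro l hyp
    obtain ⟨t, ht⟩ := hyp _ (Leaf.self (by intro bs' h; cases h))
    exact ⟨.hole 1, 1, fun _ => t, by simp [ICtx.holes], by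
      rw [ICtx.fill]; exact ht⟩
  | mu t _ =>
    intro l hyp
    obtain ⟨t', ht⟩ := hyp _ (Leaf.self (by intro bs' h; cases h))
    cases ht
  | var n =>
    intro l hyp
    obtain ⟨t', ht⟩ := hyp _ (Leaf.self (by intro bs' h; cases h))
    cases ht
  | done =>
    intro l hyp
    obtain ⟨t', ht⟩ := hyp _ (Leaf.self (by intro bs' h; cases h))
    cases ht
  | nil =>
    rename_i l hyp
    exact ⟨[], 0, fun _ => .done, rfl, rfl⟩
  | cons hd tl ihhd ihtl =>
    rename_i l hyp
    obtain ⟨A1, m1, h1, hA1h, hA1f⟩ := ihhd l (hyp hd (by simp))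
    obtain ⟨cs2, m2, h2, hc2h, hc2f⟩ := ihtl l (fun p hp => hyp p (by simp [hp]))
    refine ⟨(hd.1, A1) :: shiftBranches m1 cs2, m1 + m2,
      fun k => if k ≤ m1 then h1 k else h2 (k - m1), ?_, ?_⟩
    · rw [holesBranches, holesB_shift, hA1h, hc2h]
      have hmap : (List.range' 1 m2).map (· + m1) = List.range' (1 + m1) m2 := by
        rw [show ((· + m1) : Nat → Nat) = (m1 + ·) by funext x; omega,
          List.map_add_range']
        congr 1
        omega
      rw [hmap, Nat.add_comm m1 m2]
      exact List.range'_append_1.trans (by rw [Nat.add_comm])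
    · rw [fillBranches, fillB_shift]
      congr 1
      · have heq : A1.fill (fun k => SType.out [(l, if k ≤ m1 then h1 k else h2 (k - m1))])
            = A1.fill (fun k => SType.out [(l, h1 k)]) := by
          apply fill_congr
          intro i hi
          rw [hA1h] at hi
          have := mem_range1.mp hi
          simp [if_pos this.2]
        rw [heq, ← hA1f]
      · rw [hc2f]
        apply fillB_congr
        intro i hi
        rw [hc2h] at hi
        have hh := mem_range1.mp hi
        have hn : ¬ (i + m1 ≤ m1) := by omega
        show _ = SType.out [(l, if i + m1 ≤ m1 then h1 (i + m1) else h2 (i + m1 - m1))]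
        rw [if_neg hn, Nat.add_sub_cancel]
  | mk lab t iht =>
    rename_i l hyp
    exact iht l hyp
theorem out_single_inj {l l' : Nat} {t t' : SType}
    (h : SType.out [(l, t)] = SType.out [(l', t')]) : l = l' ∧ t = t' := by
  simpa using h

theorem WF_holes_ne_nil {A : ICtx} (h : A.WF) : A.holes ≠ [] := by
  obtain ⟨m, hm, hperm⟩ := h
  intro hnil
  have hlen := hperm.length_eq
  rw [hnil] at hlen
  simp at hlen
  omega

/-- The invariant preserved along `AntOut` steps. -/
def Inv14 (T U : SType) : Prop :=
  ∃ (R : SType → SType → Prop) (A : ICtx) (f : Nat → SType) (c : SType),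
    IsAntEqRel T R ∧ A.WF ∧ U = A.fill f ∧ ∀ i ∈ A.holes, R (f i) c

theorem antEq_symm {T a b : SType} (h : AntEq T a b) : AntEq T b a := by
  obtain ⟨R, ⟨hre, hant⟩, hab⟩ := h
  refine ⟨fun x y => R y x, ⟨fun x y hxy => ⟨(hre _ _ hxy).2, (hre _ _ hxy).1⟩, ?_⟩, hab⟩
  intro x y hxy
  obtain ⟨l, A, A', f, g, hA, hA', ho1, ho2, hcr⟩ := hant y x hxy
  exact ⟨l, A', A, g, f, hA', hA, ho2, ho1, fun i hi j hj => hcr j hj i hi⟩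

theorem inv_init {T T' : SType} (h : AntField T T') : Inv14 T T' := by
  have h' : ∃ b, AntEq T T' b := by
    obtain ⟨b, hb | hb⟩ := h
    · exact ⟨b, hb⟩
    · exact ⟨b, antEq_symm hb⟩
  obtain ⟨b, R, hR, hb⟩ := h'
  refine ⟨R, .hole 1, fun _ => T', b, hR, ⟨1, Nat.le_refl 1, ?_⟩, rfl, ?_⟩
  · rw [show (ICtx.hole 1).holes = [1] from rfl]
    exact List.Perm.refl _
  · intro i hi
    exact hb

theorem inv_core {T U : SType} (h : Inv14 T U) :
    ∃ (R : SType → SType → Prop) (c : SType) (B'0 : ICtx) (q0 : Nat → SType)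
      (l0 : Nat) (W : SType),
      IsAntEqRel T R ∧ B'0.WF ∧ OutUnf U W ∧
      OutUnf c (B'0.fill (fun k => .out [(l0, q0 k)])) ∧
      (∀ u, Leaf W u → ∃ t, u = .out [(l0, t)]) ∧
      (∃ u, Leaf W u) ∧
      (∀ u, Leaf W u → ∀ j ∈ B'0.holes, ∃ t, u = .out [(l0, t)] ∧ R t (q0 j)) := by
  obtain ⟨R, A, f, c, hR, hAWF, hU, hrel⟩ := h
  have hw : ∀ i : Nat, ∃ (li : Nat) (Bi Bi' : ICtx) (pi qi : Nat → SType),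
      i ∈ A.holes → (Bi.WF ∧ Bi'.WF ∧
        OutUnf (f i) (Bi.fill (fun k => .out [(li, pi k)])) ∧
        OutUnf c (Bi'.fill (fun k => .out [(li, qi k)])) ∧
        ∀ a ∈ Bi.holes, ∀ b ∈ Bi'.holes, R (pi a) (qi b)) := by
    intro i
    by_cases hi : i ∈ A.holes
    · obtain ⟨l, Aw, A'w, fw, gw, h1, h2, h3, h4, h5⟩ := hR.2 _ _ (hrel i hi)
      exact ⟨l, Aw, A'w, fw, gw, fun _ => ⟨h1, h2, h3, h4, h5⟩⟩
    · exact ⟨0, .hole 0, .hole 0, f, f, fun hmem => absurd hmem hi⟩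
  choose lab B B2 p q hw using hw
  obtain ⟨i0, hi0⟩ := List.exists_mem_of_ne_nil _ (WF_holes_ne_nil hAWF)
  set W := A.fill (fun i => (B i).fill (fun k => SType.out [(lab i, p i k)])) with hWdef
  have hUW : OutUnf U W := by
    rw [hU]
    exact outUnf_fill A f _ (fun i hi => (hw i hi).2.2.1)
  have hcdet : ∀ i ∈ A.holes,
      (B2 i).fill (fun k => SType.out [(lab i, q i k)]) =
      (B2 i0).fill (fun k => SType.out [(lab i0, q i0 k)]) :=
    fun i hi => outUnf_det (hw i hi).2.2.2.1 (hw i0 hi0).2.2.2.1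
  have hq : ∀ i ∈ A.holes, ∀ j ∈ (B2 i0).holes,
      lab i0 = lab i ∧ ∃ b ∈ (B2 i).holes, q i0 j = q i b := by
    intro i hi j hj
    have hlf : Leaf ((B2 i0).fill (fun k => SType.out [(lab i0, q i0 k)]))
        (SType.out [(lab i0, q i0 j)]) :=
      leaf_fill.mpr ⟨j, hj, leaf_out.mpr rfl⟩
    rw [← hcdet i hi] at hlf
    obtain ⟨b, hb, hlb⟩ := leaf_fill.mp hlf
    obtain ⟨hl, ht⟩ := out_single_inj (leaf_out.mp hlb)
    exact ⟨hl, b, hb, ht⟩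
  obtain ⟨j0, hj0⟩ := List.exists_mem_of_ne_nil _ (WF_holes_ne_nil (hw i0 hi0).2.1)
  have hchar : ∀ u, Leaf W u →
      ∃ i ∈ A.holes, ∃ a ∈ (B i).holes, u = SType.out [(lab i, p i a)] := by
    intro u hu
    obtain ⟨i, hi, hlf⟩ := leaf_fill.mp hu
    obtain ⟨a, ha, hlb⟩ := leaf_fill.mp hlf
    exact ⟨i, hi, a, ha, leaf_out.mp hlb⟩
  refine ⟨R, c, B2 i0, q i0, lab i0, W, hR, (hw i0 hi0).2.1, hUW,
    (hw i0 hi0).2.2.2.1, ?_, ?_, ?_⟩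
  · intro u hu
    obtain ⟨i, hi, a, ha, hue⟩ := hchar u hu
    exact ⟨p i a, by rw [hue, (hq i hi j0 hj0).1]⟩
  · obtain ⟨a0, ha0⟩ := List.exists_mem_of_ne_nil _ (WF_holes_ne_nil (hw i0 hi0).1)
    exact ⟨SType.out [(lab i0, p i0 a0)],
      leaf_fill.mpr ⟨i0, hi0, leaf_fill.mpr ⟨a0, ha0, leaf_out.mpr rfl⟩⟩⟩
  · intro u hu j hj
    obtain ⟨i, hi, a, ha, hue⟩ := hchar u hu
    obtain ⟨hl, b, hb, hqe⟩ := hq i hi j hj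
    refine ⟨p i a, by rw [hue, hl], ?_⟩
    rw [hqe]
    exact (hw i hi).2.2.2.2 a ha b hb

theorem inv_step {T U : SType} {A₁ : ICtx} {l : Nat} {f₁ : Nat → SType}
    (h : Inv14 T U) (hA₁ : A₁.WF)
    (hstep : OutUnf U (A₁.fill (fun k => .out [(l, f₁ k)]))) :
    Inv14 T (A₁.fill f₁) := by
  obtain ⟨R, c, B'0, q0, l0, W, hR, hB'WF, hUW, hcout, hlf1, hlfex, hlfR⟩ := inv_core h
  have hWeq : A₁.fill (fun k => SType.out [(l, f₁ k)]) = W := outUnf_det hstep hUW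
  obtain ⟨j0, hj0⟩ := List.exists_mem_of_ne_nil _ (WF_holes_ne_nil hB'WF)
  refine ⟨R, A₁, f₁, q0 j0, hR, hA₁, rfl, ?_⟩
  intro k hk
  have hlf : Leaf W (SType.out [(l, f₁ k)]) := by
    rw [← hWeq]
    exact leaf_fill.mpr ⟨k, hk, leaf_out.mpr rfl⟩
  obtain ⟨t, ht, hRt⟩ := hlfR _ hlf j0 hj0
  obtain ⟨_, ht2⟩ := out_single_inj ht
  exact ht2 ▸ hRt

theorem inv_final {T U : SType} (h : Inv14 T U) : ExtAntField T U := by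
  obtain ⟨R, c, B'0, q0, l0, W, hR, hB'WF, hUW, hcout, hlf1, hlfex, hlfR⟩ := inv_core h
  obtain ⟨A₂, m, hh, hA₂h, hWeq⟩ := decomp0 W l0 hlf1
  have hm : 1 ≤ m := by
    by_contra hm
    obtain ⟨u, hu⟩ := hlfex
    rw [hWeq] at hu
    obtain ⟨i, hi, _⟩ := leaf_fill.mp hu
    rw [hA₂h, show m = 0 by omega] at hi
    simp at hi
  refine ⟨c, Or.inl ⟨l0, A₂, B'0, hh, q0,
    ⟨m, hm, hA₂h ▸ List.Perm.refl _⟩, hB'WF, ?_, hcout, ?_⟩⟩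
  · rw [← hWeq]
    exact hUW
  · intro i hi j hj
    have hlf : Leaf W (SType.out [(l0, hh i)]) := by
      rw [hWeq]
      exact leaf_fill.mpr ⟨i, hi, leaf_out.mpr rfl⟩
    obtain ⟨t, ht, hRt⟩ := hlfR _ hlf j hj
    obtain ⟨_, ht2⟩ := out_single_inj ht
    exact ⟨R, hR, ht2 ▸ hRt⟩
/-- if `T' ∈ ant T` and `T'' = antOut T' γ` is defined for a
label sequence `γ`, then `T'' ∈ extAnt T`. -/
theorem antOut_mem_extAntField (T T' T'' : SType) (γ : List Nat)
    (hso : SingleOut T) (h1 : AntField T T') (h2 : AntOut T' γ T'') :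
    ExtAntField T T'' := by
  have hInv : Inv14 T T'' := by
    clear hso
    induction h2 with
    | nil => exact inv_init h1
    | snoc hAnt hWF hOU ih => exact inv_step ih hWF hOU
  exact inv_final hInv
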